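/- Let X ⊆ {0,1}^d and V ⊆ ℝ^d be finite sets, let λ and λ̌ be probability vectors on X such that every diagonal entry of A_semi(λ) is positive, let α ∈ [0,1), and set λ̃ = α λ̌ + (1 − α) λ. Then E_η[ max_{v∈V} v^⊤ A_semi(λ̃)^{-1/2} η ] ≤ (1 − α)^{-1/2} · E_η[ max_{v∈V} v^⊤ A_semi(λ)^{-1/2} η ]. (This is the Sudakov–Fernique mixing step used in Step 3 of the proof of the paper's Theorem 9 to show that mixing a design with an exploration design inflates the Gaussian-width constraint by at most (1−α)^{-1/2}.) -/

import Mathlib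

open MeasureTheory ProbabilityTheory
open Real Filter

/-- The standard Gaussian measure `N(0, I_d)` on `ℝ^d`. -/
noncomputable def stdGaussian (d : ℕ) : Measure (Fin d → ℝ) :=
  Measure.pi fun _ => gaussianReal 0 1

instance (d : ℕ) : IsProbabilityMeasure (stdGaussian d) := by
  unfold _root_.stdGaussian; infer_instance

lemma integrable_id_gaussian : Integrable (fun x : ℝ => x) (gaussianReal 0 1) := by
  rw [gaussianReal_of_var_ne_zero 0 one_ne_zero]
  rw [integrable_withDensity_iff (measurable_gaussianPDF 0 1)
    (Filter.Eventually.of_forall fun x => ENNReal.ofReal_lt_top)]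
  have h := (integrable_mul_exp_neg_mul_sq (b := (2:ℝ)⁻¹) (by norm_num)).const_mul
    (Real.sqrt (2 * π * 1))⁻¹
  refine h.congr ?_
  filter_upwards with x
  rw [gaussianPDF, ENNReal.toReal_ofReal (gaussianPDFReal_nonneg 0 1 x), gaussianPDFReal]
  push_cast
  ring_nf

lemma map_neg_gaussian : (gaussianReal 0 1).map (fun x => -x) = gaussianReal 0 1 := by
  have h := gaussianReal_map_const_mul (μ := 0) (v := 1) (-1)
  have h2 : (fun x : ℝ => -x) = fun x : ℝ => (-1) * x := by funext x; ring
  rw [h2, h]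
  norm_num

lemma integral_id_gaussian : ∫ x, x ∂(gaussianReal 0 1) = 0 := by
  have h : ∫ x, x ∂(gaussianReal 0 1) = ∫ x, -x ∂(gaussianReal 0 1) := by
    conv_lhs => rw [← map_neg_gaussian]
    rw [integral_map measurable_neg.aemeasurable]
    · rw [map_neg_gaussian]
      exact aestronglyMeasurable_id
  have h2 : ∫ x, -x ∂(gaussianReal 0 1) = - ∫ x, x ∂(gaussianReal 0 1) := integral_neg _
  linarith [h, h2]

lemma stdGaussian_map_eval (d : ℕ) (i : Fin d) :
    (stdGaussian d).map (fun η => η i) = gaussianReal 0 1 := by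
  apply Measure.ext; intro s hs
  rw [Measure.map_apply (measurable_pi_apply i) hs]
  have h : (fun η : Fin d → ℝ => η i) ⁻¹' s
      = Set.pi Set.univ (Function.update (fun _ => Set.univ) i s) := by
    rw [Set.eval_preimage]
  rw [_root_.stdGaussian, h, Measure.pi_pi]
  rw [Finset.prod_eq_single i]
  · rw [Function.update_self]
  · intro j _ hj
    rw [Function.update_of_ne hj, measure_univ]
  · intro hmem; exact absurd (Finset.mem_univ i) hmem

lemma integrable_eval (d : ℕ) (i : Fin d) :
    Integrable (fun η : Fin d → ℝ => η i) (stdGaussian d) := by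
  have h := integrable_id_gaussian
  rw [← stdGaussian_map_eval d i] at h
  exact (integrable_map_measure h.aestronglyMeasurable
    (measurable_pi_apply i).aemeasurable).mp h

lemma integrable_sup' {α ι : Type*} [MeasurableSpace α] {μ : Measure α}
    (s : Finset ι) (hs : s.Nonempty) (f : ι → α → ℝ)
    (hf : ∀ v ∈ s, Integrable (f v) μ) :
    Integrable (fun x => s.sup' hs fun v => f v x) μ := by
  induction hs using Finset.Nonempty.cons_induction with
  | singleton a => simpa using hf a (Finset.mem_singleton_self a)
  | cons a t ha ht ih =>
    have : (fun x => (Finset.cons a t ha).sup' (Finset.cons_nonempty ha) fun v => f v x)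
        = fun x => f a x ⊔ (t.sup' ht fun v => f v x) := by
      funext x; exact Finset.sup'_cons (α := ℝ) (f := fun v => f v x) (hb := ha) ht
    rw [this]
    exact (hf a (Finset.mem_cons_self a t)).sup
      (ih fun v hv => hf v (Finset.mem_cons_of_mem hv))

lemma integrable_affine_gaussian (K B : ℝ) :
    Integrable (fun t : ℝ => K + B * t) (gaussianReal 0 1) :=
  (integrable_const K).add (integrable_id_gaussian.const_mul B)

lemma oneD {ι : Type*} (s : Finset ι) (hs : s.Nonempty) (K a : ι → ℝ)
    {σ₁ σ₂ : ℝ} (h0 : 0 ≤ σ₁) (h12 : σ₁ ≤ σ₂) :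
    ∫ t, s.sup' hs (fun v => K v + σ₁ * (a v * t)) ∂(gaussianReal 0 1)
      ≤ ∫ t, s.sup' hs (fun v => K v + σ₂ * (a v * t)) ∂(gaussianReal 0 1) := by
  have hint : ∀ σ : ℝ, Integrable
      (fun t => s.sup' hs (fun v => K v + σ * (a v * t))) (gaussianReal 0 1) := by
    intro σ
    refine integrable_sup' s hs _ (fun v _ => ?_)
    have h2 : (fun t : ℝ => K v + σ * (a v * t)) = fun t => K v + (σ * a v) * t := by
      funext t; ring
    rw [h2]; exact integrable_affine_gaussian _ _
  have hintneg : Integrable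
      (fun t => s.sup' hs (fun v => K v + σ₂ * (a v * (-t)))) (gaussianReal 0 1) := by
    refine integrable_sup' s hs _ (fun v _ => ?_)
    have h2 : (fun t : ℝ => K v + σ₂ * (a v * (-t))) = fun t => K v + (-(σ₂ * a v)) * t := by
      funext t; ring
    rw [h2]; exact integrable_affine_gaussian _ _
  rcases eq_or_lt_of_le (h0.trans h12) with h2 | h2
  · have : σ₁ = σ₂ := le_antisymm h12 (h2 ▸ h0)
    rw [this]
  obtain ⟨θ, hθ0, hθ1, hθ⟩ : ∃ θ : ℝ, 0 ≤ θ ∧ θ ≤ 1 ∧ θ * σ₂ - (1 - θ) * σ₂ = σ₁ := by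
    refine ⟨(σ₂ + σ₁) / (2 * σ₂), div_nonneg (by linarith) (by linarith), ?_, ?_⟩
    · rw [div_le_one (by linarith)]; linarith
    · field_simp
      ring
  set g : ℝ → ℝ := fun t => s.sup' hs (fun v => K v + σ₂ * (a v * t)) with hg
  have hpt : ∀ t, s.sup' hs (fun v => K v + σ₁ * (a v * t))
      ≤ θ * g t + (1 - θ) * g (-t) := by
    intro t
    refine Finset.sup'_le hs _ (fun v hv => ?_)
    have h1 : K v + σ₂ * (a v * t) ≤ g t :=
      Finset.le_sup' (fun v => K v + σ₂ * (a v * t)) hv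
    have h2' : K v + σ₂ * (a v * (-t)) ≤ g (-t) :=
      Finset.le_sup' (fun v => K v + σ₂ * (a v * (-t))) hv
    calc K v + σ₁ * (a v * t)
        = θ * (K v + σ₂ * (a v * t)) + (1 - θ) * (K v + σ₂ * (a v * (-t))) := by
          linear_combination (- a v * t) * hθ
      _ ≤ θ * g t + (1 - θ) * g (-t) :=
          add_le_add (mul_le_mul_of_nonneg_left h1 hθ0)
            (mul_le_mul_of_nonneg_left h2' (by linarith))
  have hgneg : ∫ t, g (-t) ∂(gaussianReal 0 1) = ∫ t, g t ∂(gaussianReal 0 1) := by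
    have hsm : AEStronglyMeasurable g ((gaussianReal 0 1).map (fun x => -x)) := by
      rw [map_neg_gaussian]; exact (hint σ₂).aestronglyMeasurable
    calc ∫ t, g (-t) ∂(gaussianReal 0 1)
        = ∫ t, g t ∂((gaussianReal 0 1).map (fun x => -x)) :=
          (integral_map measurable_neg.aemeasurable hsm).symm
      _ = ∫ t, g t ∂(gaussianReal 0 1) := by rw [map_neg_gaussian]
  calc ∫ t, s.sup' hs (fun v => K v + σ₁ * (a v * t)) ∂(gaussianReal 0 1)
      ≤ ∫ t, (θ * g t + (1 - θ) * g (-t)) ∂(gaussianReal 0 1) := by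
        refine integral_mono (hint σ₁) (((hint σ₂).const_mul θ).add
          (hintneg.const_mul (1 - θ))) hpt
    _ = θ * ∫ t, g t ∂(gaussianReal 0 1)
        + (1 - θ) * ∫ t, g (-t) ∂(gaussianReal 0 1) := by
        rw [integral_add ((hint σ₂).const_mul θ) (hintneg.const_mul (1 - θ)),
          integral_const_mul, integral_const_mul]
    _ = ∫ t, g t ∂(gaussianReal 0 1) := by rw [hgneg]; ring

lemma integrable_linForm (d : ℕ) (u : Fin d → ℝ) :
    Integrable (fun η : Fin d → ℝ => ∑ i, u i * η i) (stdGaussian d) := by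
  refine integrable_finset_sum _ (fun i _ => ?_)
  exact (integrable_eval d i).const_mul (u i)

lemma integrable_supLin (d : ℕ) (V : Finset (Fin d → ℝ)) (hV : V.Nonempty)
    (D : Fin d → ℝ) :
    Integrable (fun η : Fin d → ℝ => V.sup' hV (fun v => ∑ i, v i * (D i * η i)))
      (stdGaussian d) := by
  refine integrable_sup' V hV _ (fun v _ => ?_)
  have h : (fun η : Fin d → ℝ => ∑ i, v i * (D i * η i))
      = fun η => ∑ i, (v i * D i) * η i := by
    funext η; exact Finset.sum_congr rfl (fun i _ => by ring)
  rw [h]; exact integrable_linForm d _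

lemma step (n : ℕ) (V : Finset (Fin (n+1) → ℝ)) (hV : V.Nonempty) (k : Fin (n+1))
    (D : Fin (n+1) → ℝ) {σ₁ σ₂ : ℝ} (h0 : 0 ≤ σ₁) (h12 : σ₁ ≤ σ₂) :
    ∫ η, V.sup' hV (fun v => ∑ i, v i * (Function.update D k σ₁ i * η i))
        ∂ stdGaussian (n+1)
      ≤ ∫ η, V.sup' hV (fun v => ∑ i, v i * (Function.update D k σ₂ i * η i))
        ∂ stdGaussian (n+1) := by
  set γ := gaussianReal 0 1 with hγ
  set π' : Measure (Fin n → ℝ) := Measure.pi fun _ => γ with hπ'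
  set e := MeasurableEquiv.piFinSuccAbove (fun _ : Fin (n+1) => ℝ) k with he
  have MP : MeasurePreserving e (stdGaussian (n+1)) (γ.prod π') :=
    measurePreserving_piFinSuccAbove (fun _ : Fin (n+1) => γ) k
  have hmap : MeasurePreserving e.symm (γ.prod π') (stdGaussian (n+1)) :=
    MP.symm e
  set F : ℝ → (Fin (n+1) → ℝ) → ℝ := fun σ η =>
    V.sup' hV (fun v => ∑ i, v i * (Function.update D k σ i * η i)) with hF
  have hFint : ∀ σ, Integrable (F σ) (stdGaussian (n+1)) :=
    fun σ => integrable_supLin (n+1) V hV _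
  have hcomp : ∀ σ, ∫ η, F σ η ∂ stdGaussian (n+1)
      = ∫ p, F σ (e.symm p) ∂(γ.prod π') :=
    fun σ => (hmap.integral_comp e.symm.measurableEmbedding _).symm
  have hprodint : ∀ σ, Integrable (fun p => F σ (e.symm p)) (γ.prod π') := by
    intro σ
    exact (hmap.integrable_comp_emb e.symm.measurableEmbedding).mpr (hFint σ)
  have hsymm : ∀ (p : ℝ × (Fin n → ℝ)), e.symm p = k.insertNth p.1 p.2 := by
    intro p; rfl
  have hFform : ∀ σ (t : ℝ) (y : Fin n → ℝ), F σ (e.symm (t, y))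
      = V.sup' hV (fun v =>
          (∑ j, v (k.succAbove j) * (D (k.succAbove j) * y j)) + σ * (v k * t)) := by
    intro σ t y
    rw [hsymm]
    refine Finset.sup'_congr hV rfl (fun v _ => ?_)
    rw [Fin.sum_univ_succAbove _ k]
    simp only [Fin.insertNth_apply_same, Fin.insertNth_apply_succAbove,
      Function.update_self]
    have : ∀ j : Fin n, Function.update D k σ (k.succAbove j) = D (k.succAbove j) :=
      fun j => Function.update_of_ne (Fin.succAbove_ne k j) _ _
    rw [Finset.sum_congr rfl (fun j _ => by rw [this j])]
    ring
  calc ∫ η, F σ₁ η ∂ stdGaussian (n+1)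
      = ∫ p, F σ₁ (e.symm p) ∂(γ.prod π') := hcomp σ₁
    _ = ∫ y, ∫ t, F σ₁ (e.symm (t, y)) ∂γ ∂π' := integral_prod_symm _ (hprodint σ₁)
    _ ≤ ∫ y, ∫ t, F σ₂ (e.symm (t, y)) ∂γ ∂π' := by
        refine integral_mono ((hprodint σ₁).integral_prod_right)
          ((hprodint σ₂).integral_prod_right) (fun y => ?_)
        simp only [hFform]
        exact oneD V hV _ _ h0 h12
    _ = ∫ p, F σ₂ (e.symm p) ∂(γ.prod π') := (integral_prod_symm _ (hprodint σ₂)).symm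
    _ = ∫ η, F σ₂ η ∂ stdGaussian (n+1) := (hcomp σ₂).symm

lemma key (d : ℕ) (V : Finset (Fin d → ℝ)) (hV : V.Nonempty) (c C : Fin d → ℝ)
    (h0 : ∀ i, 0 ≤ c i) (hle : ∀ i, c i ≤ C i) :
    ∫ η, V.sup' hV (fun v => ∑ i, v i * (c i * η i)) ∂ stdGaussian d
      ≤ ∫ η, V.sup' hV (fun v => ∑ i, v i * (C i * η i)) ∂ stdGaussian d := by
  set I : (Fin d → ℝ) → ℝ := fun D =>
    ∫ η, V.sup' hV (fun v => ∑ i, v i * (D i * η i)) ∂ stdGaussian d with hI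
  set Dj : ℕ → Fin d → ℝ := fun j i => if (i : ℕ) < j then C i else c i with hDj
  have h0' : Dj 0 = c := funext fun i => by simp [hDj]
  have hd : Dj d = C := funext fun i => by simp [hDj, i.isLt]
  have main : ∀ j, I (Dj 0) ≤ I (Dj j) := by
    intro j
    induction j with
    | zero => exact le_refl _
    | succ j ih =>
      refine ih.trans ?_
      by_cases hj : j < d
      · obtain ⟨n, rfl⟩ : ∃ n, d = n + 1 :=
          ⟨d - 1, (Nat.succ_pred_eq_of_pos (Nat.pos_of_ne_zero (by omega))).symm⟩
        set k : Fin (n+1) := ⟨j, hj⟩ with hk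
        have e1 : Dj j = Function.update (Dj (j+1)) k (c k) := by
          funext i
          by_cases h : i = k
          · subst h; simp [hDj, hk, Function.update_self]
          · rw [Function.update_of_ne h]
            have hne : (i : ℕ) ≠ j := fun hh => h (Fin.ext hh)
            by_cases h2 : (i : ℕ) < j
            · simp [hDj, h2, Nat.lt_succ_of_lt h2]
            · simp [hDj, h2, show ¬ (i : ℕ) < j + 1 by omega]
        have e2 : Dj (j+1) = Function.update (Dj (j+1)) k (C k) := by
          funext i
          by_cases h : i = k
          · subst h; simp [hDj, hk, Function.update_self]
          · rw [Function.update_of_ne h]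
        rw [e1]
        conv_rhs => rw [e2]
        exact step n V hV k (Dj (j+1)) (h0 k) (hle k)
      · have heq : Dj j = Dj (j+1) := by
          funext i
          have hi := i.isLt
          simp [hDj, show (i : ℕ) < j by omega, show (i : ℕ) < j + 1 by omega]
        rw [heq]
  have h := main d
  rwa [h0', hd] at h

/-- **Sudakov–Fernique mixing step (Step 3 of the proof of Theorem 9).** Mixing a design
`λ` (with positive diagonal design entries) with any design `λ̌` as
`λ̃ = α λ̌ + (1-α) λ`, `α ∈ [0,1)`, inflates the Gaussian width by at most
`(1-α)^{-1/2}`: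
`E_η[max_{v∈V} vᵀ A_semi(λ̃)^{-1/2} η] ≤ (1-α)^{-1/2} E_η[max_{v∈V} vᵀ A_semi(λ)^{-1/2} η]`. -/
theorem sudakov_fernique_mixing (d : ℕ) (X V : Finset (Fin d → ℝ)) (hV : V.Nonempty)
    (h01 : ∀ x ∈ X, ∀ i, x i = 0 ∨ x i = 1)
    (w wc : (Fin d → ℝ) → ℝ)
    (hw0 : ∀ x ∈ X, 0 ≤ w x) (hw1 : ∑ x ∈ X, w x = 1)
    (hwpos : ∀ i : Fin d, 0 < ∑ x ∈ X, w x * x i)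
    (hwc0 : ∀ x ∈ X, 0 ≤ wc x) (hwc1 : ∑ x ∈ X, wc x = 1)
    (α : ℝ) (hα0 : 0 ≤ α) (hα1 : α < 1) :
    (∫ η, V.sup' hV (fun v => ∑ i, v i * η i /
        Real.sqrt (∑ x ∈ X, (α * wc x + (1 - α) * w x) * x i)) ∂ stdGaussian d) ≤
      (Real.sqrt (1 - α))⁻¹ *
        ∫ η, V.sup' hV (fun v => ∑ i, v i * η i /
          Real.sqrt (∑ x ∈ X, w x * x i)) ∂ stdGaussian d := by
  have h1α : (0:ℝ) < 1 - α := by linarith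
  have hr0 : (0:ℝ) ≤ (Real.sqrt (1 - α))⁻¹ := inv_nonneg.mpr (Real.sqrt_nonneg _)
  have hsum0 : ∀ i, (0:ℝ) ≤ ∑ x ∈ X, wc x * x i := by
    intro i
    refine Finset.sum_nonneg (fun x hx => mul_nonneg (hwc0 x hx) ?_)
    rcases h01 x hx i with h | h <;> rw [h] <;> norm_num
  have hsplit : ∀ i, (∑ x ∈ X, (α * wc x + (1 - α) * w x) * x i)
      = α * (∑ x ∈ X, wc x * x i) + (1 - α) * ∑ x ∈ X, w x * x i := by
    intro i
    rw [Finset.mul_sum, Finset.mul_sum, ← Finset.sum_add_distrib]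
    exact Finset.sum_congr rfl (fun x _ => by ring)
  have hge : ∀ i, (1 - α) * (∑ x ∈ X, w x * x i)
      ≤ ∑ x ∈ X, (α * wc x + (1 - α) * w x) * x i := by
    intro i
    rw [hsplit i]
    have := mul_nonneg hα0 (hsum0 i)
    linarith
  have hcC : ∀ i, (Real.sqrt (∑ x ∈ X, (α * wc x + (1 - α) * w x) * x i))⁻¹
      ≤ (Real.sqrt (1 - α))⁻¹ * (Real.sqrt (∑ x ∈ X, w x * x i))⁻¹ := by
    intro i
    rw [← mul_inv, ← Real.sqrt_mul (le_of_lt h1α)]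
    exact inv_anti₀ (Real.sqrt_pos.mpr (mul_pos h1α (hwpos i)))
      (Real.sqrt_le_sqrt (hge i))
  have hL : (fun η : Fin d → ℝ => V.sup' hV (fun v => ∑ i, v i * η i /
        Real.sqrt (∑ x ∈ X, (α * wc x + (1 - α) * w x) * x i)))
      = fun η => V.sup' hV (fun v => ∑ i, v i *
          ((Real.sqrt (∑ x ∈ X, (α * wc x + (1 - α) * w x) * x i))⁻¹ * η i)) := by
    funext η
    refine Finset.sup'_congr hV rfl (fun v _ => ?_)
    refine Finset.sum_congr rfl (fun i _ => ?_)
    rw [div_eq_mul_inv]; ring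
  have hR : (fun η : Fin d → ℝ => (Real.sqrt (1 - α))⁻¹ *
        V.sup' hV (fun v => ∑ i, v i * η i / Real.sqrt (∑ x ∈ X, w x * x i)))
      = fun η => V.sup' hV (fun v => ∑ i, v i *
          (((Real.sqrt (1 - α))⁻¹ * (Real.sqrt (∑ x ∈ X, w x * x i))⁻¹) * η i)) := by
    funext η
    have hcomp := Finset.comp_sup'_eq_sup'_comp (α := ℝ) (γ := ℝ) hV
      (f := fun v => ∑ i, v i * η i / Real.sqrt (∑ x ∈ X, w x * x i))
      (fun z : ℝ => (Real.sqrt (1 - α))⁻¹ * z)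
      (fun x y => by
        exact mul_max_of_nonneg x y hr0)
    rw [hcomp]
    refine Finset.sup'_congr hV rfl (fun v _ => ?_)
    rw [Function.comp_apply, Finset.mul_sum]
    refine Finset.sum_congr rfl (fun i _ => ?_)
    rw [div_eq_mul_inv]; ring
  rw [hL, ← integral_const_mul, hR]
  exact key d V hV _ _ (fun i => inv_nonneg.mpr (Real.sqrt_nonneg _)) hcC
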